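/- The class of twice differentiable functions satisfying the strict Laguerre inequality f'^2 - f f'' > 0 on an interval is closed under pointwise multiplication: if L(f) > 0 and L(g) > 0 on the interval and f, g are not both zero at any point, then L(f·g) > 0 there. -/
import Mathlib

theorem laguerre_class_closed_under_mul
    (I : Set ℝ) (hI : IsOpen I)
    (f f' f'' g g' g'' : ℝ → ℝ)
    (hf : ∀ x ∈ I, HasDerivAt f (f' x) x)
    (hf' : ∀ x ∈ I, HasDerivAt f' (f'' x) x)
    (hg : ∀ x ∈ I, HasDerivAt g (g' x) x)
    (hg' : ∀ x ∈ I, HasDerivAt g' (g'' x) x)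
    (hLf : ∀ x ∈ I, (f' x) ^ 2 - f x * f'' x > 0)
    (hLg : ∀ x ∈ I, (g' x) ^ 2 - g x * g'' x > 0)
    (hne : ∀ x ∈ I, f x ≠ 0 ∨ g x ≠ 0) :
    ∀ x ∈ I,
      (f' x * g x + f x * g' x) ^ 2 -
        (f x * g x) * (f'' x * g x + 2 * f' x * g' x + f x * g'' x) > 0 := by
  intro x hx
  have h1 := hLf x hx
  have h2 := hLg x hx
  have key : (f' x * g x + f x * g' x) ^ 2 -
      (f x * g x) * (f'' x * g x + 2 * f' x * g' x + f x * g'' x)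
      = g x ^ 2 * ((f' x) ^ 2 - f x * f'' x) + f x ^ 2 * ((g' x) ^ 2 - g x * g'' x) := by
    ring
  rw [key]
  rcases hne x hx with h | h
  · have : f x ^ 2 > 0 := by positivity
    positivity
  · have : g x ^ 2 > 0 := by positivity
    positivity
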